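/- Let Ĝ be a group, G a normal subgroup, and φ a Ĝ-invariant homogeneous quasimorphism on G. If x ∈ G can be written as a product of m elements each of the form [ĝ, g] with ĝ ∈ Ĝ and g ∈ G, then |φ(x)| ≤ (2m - 1)·D(φ). -/

import Mathlib

open scoped commutatorElement

private lemma aux_list_bound {Ghat : Type*} [Group Ghat] (G : Subgroup Ghat)
    (φ : Ghat → ℝ) (D : ℝ) (hD : 0 ≤ D)
    (hq : ∀ g h : Ghat, g ∈ G → h ∈ G → |φ (g * h) - φ g - φ h| ≤ D) :
    ∀ l : List Ghat, l ≠ [] → (∀ c ∈ l, c ∈ G ∧ |φ c| ≤ D) →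
      |φ l.prod| ≤ (2 * (l.length : ℝ) - 1) * D := by
  intro l
  induction l with
  | nil => simp
  | cons c t ih =>
    intro _ hmem
    rcases t with _ | ⟨d, t'⟩
    · simp only [List.prod_singleton, List.length_singleton, Nat.cast_one]
      have := (hmem c (by simp)).2
      linarith
    · set t := d :: t' with ht
      have htne : t ≠ [] := by simp [ht]
      have hbound := ih htne (fun c hc => hmem c (List.mem_cons_of_mem _ hc))
      have hcG : c ∈ G := (hmem c (by simp)).1
      have htG : t.prod ∈ G := list_prod_mem (fun c hc => (hmem c (List.mem_cons_of_mem _ hc)).1)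
      have hqc := hq c t.prod hcG htG
      have h1 : |φ (c * t.prod)| ≤ |φ c| + |φ t.prod| + D := by
        have := abs_sub_abs_le_abs_sub (φ (c * t.prod)) (φ c + φ t.prod)
        have h2 : |φ c + φ t.prod| ≤ |φ c| + |φ t.prod| := abs_add_le _ _
        have h3 : |φ (c * t.prod) - (φ c + φ t.prod)| ≤ D := by
          have : φ (c * t.prod) - (φ c + φ t.prod) = φ (c * t.prod) - φ c - φ t.prod := by ring
          rw [this]; exact hqc
        linarith
      have hcb : |φ c| ≤ D := (hmem c (by simp)).2
      have : (c :: t).prod = c * t.prod := List.prod_cons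
      rw [this]
      have hlen : ((c :: t).length : ℝ) = (t.length : ℝ) + 1 := by push_cast [List.length_cons]; ring
      rw [hlen]
      nlinarith [hbound, h1, hcb]

theorem abs_le_of_prod_mixed_commutators
    {Ghat : Type*} [Group Ghat] (G : Subgroup Ghat) [G.Normal]
    (φ : Ghat → ℝ) (D : ℝ)
    (hq : ∀ g h : Ghat, g ∈ G → h ∈ G → |φ (g * h) - φ g - φ h| ≤ D)
    (hhom : ∀ g ∈ G, ∀ n : ℤ, φ (g ^ n) = n * φ g)
    (hinv : ∀ (a : Ghat), ∀ g ∈ G, φ (a * g * a⁻¹) = φ g)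
    (m : ℕ) (hm : 1 ≤ m) (a b : Fin m → Ghat) (hb : ∀ i, b i ∈ G)
    (x : Ghat) (hx : x = (List.ofFn fun i => ⁅a i, b i⁆).prod) :
    |φ x| ≤ (2 * (m : ℝ) - 1) * D := by
  have hφ1 : φ 1 = 0 := by
    have := hhom 1 G.one_mem 0
    simpa using this
  have hD : 0 ≤ D := by
    have := hq 1 1 G.one_mem G.one_mem
    simp [hφ1] at this
    linarith [abs_nonneg (φ 1), this]
  -- each commutator: membership and bound
  have key : ∀ c ∈ (List.ofFn fun i => ⁅a i, b i⁆), c ∈ G ∧ |φ c| ≤ D := by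
    intro c hc
    rw [List.mem_ofFn] at hc
    obtain ⟨i, rfl⟩ := hc
    show ⁅a i, b i⁆ ∈ G ∧ |φ ⁅a i, b i⁆| ≤ D
    have hconj : a i * b i * (a i)⁻¹ ∈ G := Subgroup.Normal.conj_mem ‹G.Normal› _ (hb i) _
    have hbinv : (b i)⁻¹ ∈ G := G.inv_mem (hb i)
    have hcomm : ⁅a i, b i⁆ = (a i * b i * (a i)⁻¹) * (b i)⁻¹ := by
      simp [commutatorElement_def, mul_assoc]
    constructor
    · rw [hcomm]; exact G.mul_mem hconj hbinv
    · rw [hcomm]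
      have h1 : φ (a i * b i * (a i)⁻¹) = φ (b i) := hinv (a i) (b i) (hb i)
      have h2 : φ ((b i)⁻¹) = -φ (b i) := by
        have := hhom (b i) (hb i) (-1)
        simpa using this
      have := hq _ _ hconj hbinv
      rw [h1, h2] at this
      calc |φ ((a i * b i * (a i)⁻¹) * (b i)⁻¹)|
          = |φ ((a i * b i * (a i)⁻¹) * (b i)⁻¹) - φ (b i) - (-φ (b i))| := by ring_nf
        _ ≤ D := this
  have hne : (List.ofFn fun i => ⁅a i, b i⁆) ≠ [] := by
    intro h
    have := congrArg List.length h
    simp at this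
    omega
  have := aux_list_bound G φ D hD hq _ hne key
  simpa [hx, List.length_ofFn] using this
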